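/- Let (C_k)_{k≥1} be a sequence of Laurent polynomials with integer coefficients such that there exist positive constants A, B, D with ℓ¹-norm ‖C_k‖₁ ≤ e^{A k + B log k} and support of C_k contained in [−D k², D k²] for all k ≥ 1. Then there exist positive constants A₁, A₂, A₃, A₄, A₅ such that for every complex number α with 0 < Re(α) < 1/6 and all integers n, k with 1 ≤ k < n, one has |K(n,k,α) · C_k(e^{α/n})| ≤ exp((A₁ + A₂ |Re(α)| + A₃ log|α|) · k + A₄ log k + A₅), where K(n,k,α) = ∏_{j=1}^{k} ((e^{α/2} − e^{−α/2})² − (e^{jα/(2n)} − e^{−jα/(2n)})²). -/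

import Mathlib

/-- The evaluation of an integer Laurent polynomial (a finitely supported function `ℤ → ℤ`)
at a complex number `q`: `∑_j a_j q^j`. -/
noncomputable def laurentEval (c : ℤ →₀ ℤ) (q : ℂ) : ℂ :=
  ∑ j ∈ c.support, (c j : ℂ) * q ^ j

/-- The ℓ¹-norm of an integer Laurent polynomial: `∑_j |a_j|`. -/
noncomputable def laurentL1 (c : ℤ →₀ ℤ) : ℝ :=
  ∑ j ∈ c.support, |(c j : ℝ)|

/-- The evaluation of the cyclotomic kernel `C_{n,k}` at `q = e^{α/n}`:
`K(n,k,α) = ∏_{j=1}^{k} ((e^{α/2} − e^{−α/2})² − (e^{jα/(2n)} − e^{−jα/(2n)})²)`. -/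
noncomputable def cycKer (n k : ℕ) (α : ℂ) : ℂ :=
  ∏ j ∈ Finset.Icc 1 k,
    ((Complex.exp (α / 2) - Complex.exp (-α / 2)) ^ 2
      - (Complex.exp ((j : ℂ) * α / (2 * n)) - Complex.exp (-((j : ℂ) * α / (2 * n)))) ^ 2)

/-- If `(C_k)` is a sequence of integer Laurent polynomials with
`‖C_k‖₁ ≤ e^{A k + B log k}` and support contained in `[−D k², D k²]` for all `k ≥ 1`,
then there exist positive constants `A₁,…,A₅` such that for every `α` with `0 < Re α < 1/6`
and all `1 ≤ k < n`,
`|K(n,k,α) · C_k(e^{α/n})| ≤ exp((A₁ + A₂ |Re α| + A₃ log|α|) k + A₄ log k + A₅)`. -/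
lemma abs_sinh_small (z : ℂ) (h0 : 0 ≤ z.re) (h1 : ‖2 * z‖ ≤ 1) :
    ‖Complex.exp z - Complex.exp (-z)‖ ≤ 2 * ‖2 * z‖ := by
  have hfac : Complex.exp z - Complex.exp (-z)
      = Complex.exp (-z) * (Complex.exp (2 * z) - 1) := by
    rw [mul_sub, ← Complex.exp_add, mul_one]
    have : -z + 2 * z = z := by ring
    rw [this]
  rw [hfac, norm_mul]
  have h2 : ‖Complex.exp (-z)‖ ≤ 1 := by
    rw [Complex.norm_exp]
    exact Real.exp_le_one_iff.mpr (by simp [h0])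
  calc ‖Complex.exp (-z)‖ * ‖Complex.exp (2*z) - 1‖
      ≤ 1 * (2 * ‖2 * z‖) :=
        mul_le_mul h2 (Complex.norm_exp_sub_one_le h1) (norm_nonneg _) one_pos.le
    _ = 2 * ‖2 * z‖ := one_mul _

lemma abs_sinh_big (z : ℂ) (h0 : 0 ≤ z.re) (h1 : z.re ≤ 1) :
    ‖Complex.exp z - Complex.exp (-z)‖ ≤ 4 := by
  have := norm_sub_le (Complex.exp z) (Complex.exp (-z))
  rw [Complex.norm_exp, Complex.norm_exp, Complex.neg_re] at this
  have h2 : Real.exp z.re ≤ Real.exp 1 := Real.exp_le_exp.mpr h1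
  have h3 : Real.exp 1 < 2.7182818286 := Real.exp_one_lt_d9
  have h4 : Real.exp (-z.re) ≤ 1 := Real.exp_le_one_iff.mpr (by linarith)
  linarith

lemma factor_bound (α : ℂ) (h1 : 0 < α.re) (h2 : α.re < 1 / 6) (n j : ℕ)
    (hn : 0 < n) (hjn : j ≤ n) :
    ‖(Complex.exp (α / 2) - Complex.exp (-α / 2)) ^ 2
      - (Complex.exp ((j : ℂ) * α / (2 * n)) - Complex.exp (-((j : ℂ) * α / (2 * n)))) ^ 2‖
      ≤ 32 * ‖α‖ := by
  have hn' : (0:ℝ) < (n:ℝ) := by exact_mod_cast hn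
  set z₁ : ℂ := α / 2 with hz₁
  set z₂ : ℂ := (j : ℂ) * α / (2 * n) with hz₂
  have e1 : -α / 2 = -z₁ := by rw [hz₁]; ring
  have e2 : z₂ = (((j : ℝ) / (2 * (n:ℝ)) : ℝ) : ℂ) * α := by
    rw [hz₂]; push_cast; field_simp
  have re1 : z₁.re = α.re / 2 := by
    have : z₁ = (((1:ℝ)/2 : ℝ) : ℂ) * α := by rw [hz₁]; push_cast; ring
    rw [this, Complex.re_ofReal_mul]; ring
  have re2 : z₂.re = (j : ℝ) / (2 * n) * α.re := by
    rw [e2, Complex.re_ofReal_mul]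
  have hjn' : (j:ℝ) ≤ (n:ℝ) := by exact_mod_cast hjn
  have hr1 : 0 ≤ z₁.re := by rw [re1]; linarith
  have hr2 : 0 ≤ z₂.re := by
    rw [re2]; positivity
  have hr1' : z₁.re ≤ 1 := by rw [re1]; linarith
  have hr2' : z₂.re ≤ 1 := by
    rw [re2]
    have hfrac : (j:ℝ) / (2 * n) ≤ 1/2 := by
      rw [div_le_div_iff₀ (by linarith) (by norm_num)]; linarith
    nlinarith
  have habs : ∀ x y : ℂ, ‖x ^ 2 - y ^ 2‖
      ≤ ‖x‖ ^ 2 + ‖y‖ ^ 2 := by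
    intro x y
    calc ‖x ^ 2 - y ^ 2‖ ≤ ‖x^2‖ + ‖y^2‖ :=
          norm_sub_le _ _
      _ = ‖x‖ ^ 2 + ‖y‖ ^ 2 := by rw [norm_pow, norm_pow]
  have key := habs (Complex.exp z₁ - Complex.exp (-z₁)) (Complex.exp z₂ - Complex.exp (-z₂))
  rw [e1]
  have hαpos : 0 < ‖α‖ := by
    simp only [norm_pos_iff]
    intro h; rw [h] at h1; simp at h1
  rcases le_or_gt (‖α‖) 1 with hsm | hbg
  · -- small case
    have ha1 : ‖2 * z₁‖ = ‖α‖ := by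
      rw [hz₁]; congr 1; ring
    have ha2 : ‖2 * z₂‖ ≤ ‖α‖ := by
      have : (2 : ℂ) * z₂ = (((j : ℝ) / (n:ℝ) : ℝ) : ℂ) * α := by
        rw [hz₂]; push_cast; field_simp
      rw [this, norm_mul, Complex.norm_real, Real.norm_eq_abs]
      have : |(j:ℝ)/(n:ℝ)| ≤ 1 := by
        rw [abs_div, abs_of_nonneg (by positivity : (0:ℝ) ≤ (j:ℝ)),
          abs_of_pos hn', div_le_one hn']
        exact hjn'
      nlinarith [norm_nonneg α]
    have b1 := abs_sinh_small z₁ hr1 (by rw [ha1]; exact hsm)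
    have b2 := abs_sinh_small z₂ hr2 (le_trans ha2 hsm)
    rw [ha1] at b1
    have b2' : ‖Complex.exp z₂ - Complex.exp (-z₂)‖ ≤ 2 * ‖α‖ := by
      linarith
    nlinarith [norm_nonneg (Complex.exp z₁ - Complex.exp (-z₁)),
      norm_nonneg (Complex.exp z₂ - Complex.exp (-z₂))]
  · have b1 := abs_sinh_big z₁ hr1 hr1'
    have b2 := abs_sinh_big z₂ hr2 hr2'
    nlinarith [norm_nonneg (Complex.exp z₁ - Complex.exp (-z₁)),
      norm_nonneg (Complex.exp z₂ - Complex.exp (-z₂))]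

theorem cyclotomic_summand_estimate (C : ℕ → (ℤ →₀ ℤ)) (A B D : ℝ)
    (hA : 0 < A) (hB : 0 < B) (hD : 0 < D)
    (hnorm : ∀ k : ℕ, 1 ≤ k → laurentL1 (C k) ≤ Real.exp (A * k + B * Real.log k))
    (hsupp : ∀ k : ℕ, 1 ≤ k → ∀ j ∈ (C k).support, |(j : ℝ)| ≤ D * (k : ℝ) ^ 2) :
    ∃ A₁ A₂ A₃ A₄ A₅ : ℝ, 0 < A₁ ∧ 0 < A₂ ∧ 0 < A₃ ∧ 0 < A₄ ∧ 0 < A₅ ∧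
      ∀ α : ℂ, 0 < α.re → α.re < 1 / 6 → ∀ n k : ℕ, 1 ≤ k → k < n →
        ‖cycKer n k α * laurentEval (C k) (Complex.exp (α / n))‖ ≤
          Real.exp ((A₁ + A₂ * |α.re| + A₃ * Real.log ‖α‖) * k
            + A₄ * Real.log k + A₅) := by
  have hlog32 : 0 < Real.log 32 := Real.log_pos (by norm_num)
  refine ⟨A + Real.log 32, D, 1, B, 1, by linarith, hD, one_pos, hB, one_pos, ?_⟩
  intro α h1 h2 n k hk hkn
  have hn : 0 < n := lt_of_le_of_lt (Nat.zero_le k) hkn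
  have hn' : (0:ℝ) < (n:ℝ) := by exact_mod_cast hn
  have hk' : (1:ℝ) ≤ (k:ℝ) := by exact_mod_cast hk
  have hkn' : (k:ℝ) ≤ (n:ℝ) := by exact_mod_cast hkn.le
  have hαpos : 0 < ‖α‖ := by
    simp only [norm_pos_iff]
    intro h; rw [h] at h1; simp at h1
  -- bound on cycKer
  have hker : ‖cycKer n k α‖ ≤ (32 * ‖α‖) ^ k := by
    rw [cycKer, Complex.norm_prod]
    calc (∏ j ∈ Finset.Icc 1 k, ‖_‖)
        ≤ ∏ _j ∈ Finset.Icc 1 k, (32 * ‖α‖) := by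
          apply Finset.prod_le_prod
          · intro i _; exact norm_nonneg _
          · intro i hi
            apply factor_bound α h1 h2 n i hn
            exact le_trans (Finset.mem_Icc.mp hi).2 hkn.le
      _ = (32 * ‖α‖) ^ k := by
          rw [Finset.prod_const, Nat.card_Icc]; norm_num
  -- bound on the evaluation
  set q : ℂ := Complex.exp (α / n) with hq
  have hqabs : ∀ j : ℤ, ‖q ^ j‖ = Real.exp ((j : ℝ) / (n:ℝ) * α.re) := by
    intro j
    have hpow : q ^ j = Complex.exp ((j : ℂ) * (α / n)) := (Complex.exp_int_mul _ j).symm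
    have hre : ((j : ℂ) * (α / n)).re = (j : ℝ) / (n:ℝ) * α.re := by
      have : (j : ℂ) * (α / n) = (((j : ℝ) / (n:ℝ) : ℝ) : ℂ) * α := by
        push_cast; field_simp
      rw [this, Complex.re_ofReal_mul]
    rw [hpow, Complex.norm_exp, hre]
  have heval : ‖laurentEval (C k) q‖
      ≤ Real.exp (A * k + B * Real.log k) * Real.exp (D * k * α.re) := by
    rw [laurentEval]
    calc ‖∑ j ∈ (C k).support, ((C k) j : ℂ) * q ^ j‖
        ≤ ∑ j ∈ (C k).support, ‖((C k) j : ℂ) * q ^ j‖ :=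
          norm_sum_le _ _
      _ ≤ ∑ j ∈ (C k).support, |((C k) j : ℝ)| * Real.exp (D * k * α.re) := by
          apply Finset.sum_le_sum
          intro j hj
          rw [norm_mul, Complex.norm_intCast, hqabs j]
          apply mul_le_mul_of_nonneg_left _ (abs_nonneg _)
          apply Real.exp_le_exp.mpr
          have hjb : |(j : ℝ)| ≤ D * (k : ℝ) ^ 2 := hsupp k hk j hj
          have h3 : (j:ℝ) / n * α.re ≤ D * (k:ℝ)^2 / n * α.re := by
            have hj' : (j:ℝ) ≤ D * (k:ℝ)^2 := le_trans (le_abs_self _) hjb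
            have := h1.le
            gcongr
          have h4 : D * (k:ℝ)^2 / n * α.re ≤ D * k * α.re := by
            apply mul_le_mul_of_nonneg_right _ h1.le
            rw [div_le_iff₀ hn']
            nlinarith [mul_le_mul_of_nonneg_left hkn'
              (by positivity : (0:ℝ) ≤ D * (k:ℝ))]
          linarith
      _ = laurentL1 (C k) * Real.exp (D * k * α.re) := by
          rw [laurentL1, Finset.sum_mul]
      _ ≤ Real.exp (A * k + B * Real.log k) * Real.exp (D * k * α.re) := by
          apply mul_le_mul_of_nonneg_right (hnorm k hk) (Real.exp_pos _).le
  -- combine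
  have hpow32 : (32 * ‖α‖) ^ k
      = Real.exp ((Real.log 32 + Real.log ‖α‖) * k) := by
    rw [← Real.log_mul (by norm_num) (ne_of_gt hαpos)]
    rw [← Real.exp_log (show (0:ℝ) < 32 * ‖α‖ by positivity), ← Real.exp_nat_mul]
    rw [Real.log_exp, mul_comm]
  rw [norm_mul]
  calc ‖cycKer n k α‖ * ‖laurentEval (C k) q‖
      ≤ (32 * ‖α‖) ^ k
          * (Real.exp (A * k + B * Real.log k) * Real.exp (D * k * α.re)) := by
        apply mul_le_mul hker heval (norm_nonneg _) (by positivity)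
    _ = Real.exp ((Real.log 32 + Real.log ‖α‖) * k
          + (A * k + B * Real.log k) + D * k * α.re) := by
        rw [hpow32, ← Real.exp_add, ← Real.exp_add]
        congr 1
        ring
    _ ≤ Real.exp ((A + Real.log 32 + D * |α.re| + 1 * Real.log ‖α‖) * k
          + B * Real.log k + 1) := by
        apply Real.exp_le_exp.mpr
        rw [abs_of_pos h1]
        nlinarith [Real.log_nonneg hk', mul_pos (mul_pos hD (lt_of_lt_of_le one_pos hk')) h1]
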